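/- Define birational maps on $(a_0,a_1,a_2;f_0,f_1,f_2)$ by $s_i(a_j)=a_j a_i^{-a_{ij}}$, $s_i(f_j)=f_j\left(\frac{a_i+f_i}{1+a_i f_i}\right)^{u_{ij}}$ (indices mod 3), where $A=(a_{ij})$ is the $A_2^{(1)}$ Cartan matrix and $U=(u_{ij})$ is the skew matrix with $u_{01}=u_{12}=u_{20}=1$. Then $s_i^2=\mathrm{id}$ for each $i$. -/

import Mathlib

/-- The Cartan matrix of type $A_2^{(1)}$: $a_{ii}=2$, $a_{ij}=-1$ for $i\neq j$. -/
def cartanA2 (i j : ZMod 3) : ℤ := if i = j then 2 else -1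

/-- The orientation matrix $U$: $u_{01}=u_{12}=u_{20}=1$, skew-symmetric, $u_{ii}=0$. -/
def orientU (i j : ZMod 3) : ℤ := if j = i + 1 then 1 else if j = i - 1 then -1 else 0

/-- Action of $s_i$ on the parameters: $s_i(a_j)=a_j a_i^{-a_{ij}}$. -/
noncomputable def weylSa {K : Type*} [Field K] (i : ZMod 3) (a : ZMod 3 → K) :
    ZMod 3 → K := fun j => a j * a i ^ (-(cartanA2 i j))

/-- Action of $s_i$ on the $f$-variables:
$s_i(f_j)=f_j\left(\frac{a_i+f_i}{1+a_if_i}\right)^{u_{ij}}$. -/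
noncomputable def weylSf {K : Type*} [Field K] (i : ZMod 3) (a f : ZMod 3 → K) :
    ZMod 3 → K := fun j => f j * ((a i + f i) / (1 + a i * f i)) ^ (orientU i j)

theorem stmt14 {K : Type*} [Field K] (a f : ZMod 3 → K)
    (ha : ∀ i, a i ≠ 0) (h1 : ∀ i, a i + f i ≠ 0) (h2 : ∀ i, 1 + a i * f i ≠ 0) :
    ∀ i : ZMod 3, weylSa i (weylSa i a) = a ∧ weylSf i (weylSa i a) (weylSf i a f) = f := by
  intro i
  have hne1 : ¬ (i = i + 1) := by simp only [left_eq_add]; decide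
  have hne2 : ¬ (i = i - 1) := by
    rw [eq_sub_iff_add_eq]
    simp only [add_eq_left]; decide
  have hcii : cartanA2 i i = 2 := if_pos rfl
  have hai : weylSa i a i = (a i)⁻¹ := by
    simp only [weylSa, hcii]
    rw [show -(2:ℤ) = -1 + -1 by ring, zpow_add₀ (ha i), zpow_neg_one]
    field_simp
  have hfi : weylSf i a f i = f i := by
    simp only [weylSf, orientU, if_neg hne1, if_neg hne2, zpow_zero, mul_one]
  have hR : (a i + f i) / (1 + a i * f i) ≠ 0 := div_ne_zero (h1 i) (h2 i)
  have h3 : 1 + (a i)⁻¹ * f i ≠ 0 := by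
    intro h
    apply h1 i
    have := congrArg (fun x => a i * x) h
    simpa [mul_add, ← mul_assoc, mul_inv_cancel₀ (ha i)] using this
  constructor
  · funext j
    show weylSa i a j * weylSa i a i ^ (-(cartanA2 i j)) = a j
    rw [hai, inv_zpow]
    show a j * a i ^ (-(cartanA2 i j)) * (a i ^ (-(cartanA2 i j)))⁻¹ = a j
    rw [mul_assoc, mul_inv_cancel₀ (zpow_ne_zero _ (ha i)), mul_one]
  · funext j
    have hR' : (weylSa i a i + weylSf i a f i) / (1 + weylSa i a i * weylSf i a f i)
        = ((a i + f i) / (1 + a i * f i))⁻¹ := by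
      rw [hai, hfi, inv_div, div_eq_div_iff h3 (h1 i)]
      linear_combination (1 - f i ^ 2) * inv_mul_cancel₀ (ha i)
    show weylSf i a f j *
        ((weylSa i a i + weylSf i a f i) / (1 + weylSa i a i * weylSf i a f i)) ^ orientU i j
        = f j
    rw [hR', inv_zpow]
    show f j * ((a i + f i) / (1 + a i * f i)) ^ orientU i j *
        (((a i + f i) / (1 + a i * f i)) ^ orientU i j)⁻¹ = f j
    rw [mul_assoc, mul_inv_cancel₀ (zpow_ne_zero _ hR), mul_one]
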